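/- Let q be a prime power, fix r, j, m ∈ ℕ with 2 ≤ j ≤ m, let H be a j-uniform hypergraph on {1,…,m}, and let f ∈ 𝔽_q[x] be a monic irreducible polynomial. Let K_f ⊆ (𝔽_q[x])^m be the set of m-tuples (g_1,…,g_m) that fail to be H-wise relatively r-prime at f, i.e., such that there exists a hyperedge e of H with f^r dividing gcd{g_i : i ∈ e}. Then the density of K_f exists, equals 1 − ∑_{k=0}^m i_k(H) (1 − 1/q^{r·deg f})^{m−k} (1/q^{r·deg f})^k, and satisfies 𝔻(K_f) ≤ ((m−1)/q^{r·deg f})^2. -/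

import Mathlib

open scoped BigOperators

/-- The number of independent vertex sets of cardinality `k` of the hypergraph `H`. -/
noncomputable def indepCount {m : ℕ} (H : Finset (Finset (Fin m))) (k : ℕ) : ℕ :=
  Nat.card {s : Finset (Fin m) // (∀ e ∈ H, ¬ e ⊆ s) ∧ s.card = k}

/-- The `l`-th polynomial `f_l` in the enumeration of `𝔽_q[x]` determined by the
enumeration `a` of `𝔽_q` (with `a 0 = 0`). -/
noncomputable def fenum {Fq : Type*} [Field Fq] [Fintype Fq]
    (a : Fin (Fintype.card Fq) → Fq) (l : ℕ) : Polynomial Fq :=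
  ∑ i ∈ Finset.range (l + 1),
    Polynomial.C (a ⟨l / (Fintype.card Fq) ^ i % Fintype.card Fq,
      Nat.mod_lt _ Fintype.card_pos⟩) * Polynomial.X ^ i

open Polynomial Finset

section aux
open scoped Classical
variable {Fq : Type*} [Field Fq] [Fintype Fq]
variable (a : Fin (Fintype.card Fq) → Fq)

lemma fenum_coeff (ha0 : a ⟨0, Fintype.card_pos⟩ = 0) (l i : ℕ) :
    (fenum a l).coeff i
      = a ⟨l / (Fintype.card Fq) ^ i % Fintype.card Fq, Nat.mod_lt _ Fintype.card_pos⟩ := by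
  classical
  rw [fenum, Polynomial.finset_sum_coeff]
  simp only [Polynomial.coeff_C_mul, Polynomial.coeff_X_pow, mul_ite, mul_one, mul_zero]
  rw [Finset.sum_ite_eq (Finset.range (l+1)) i]
  split_ifs with h
  · rfl
  · have hq : 2 ≤ Fintype.card Fq := Fintype.one_lt_card
    have hil : l + 1 ≤ i := by
      by_contra hc
      exact h (Finset.mem_range.mpr (by omega))
    have hlt : l < (Fintype.card Fq) ^ i := by
      calc l < i := by omega
        _ < 2 ^ i := Nat.lt_two_pow_self
        _ ≤ (Fintype.card Fq) ^ i := Nat.pow_le_pow_left hq i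
    have : l / (Fintype.card Fq) ^ i = 0 := Nat.div_eq_of_lt hlt
    rw [eq_comm, ← ha0]
    congr 1
    simp [this]

lemma nat_eq_of_digits {q : ℕ} (hq : 2 ≤ q) (l : ℕ) :
    ∀ l', (∀ i, l / q ^ i % q = l' / q ^ i % q) → l = l' := by
  induction l using Nat.strong_induction_on with
  | _ l ih =>
    intro l' h
    rcases Nat.eq_zero_or_pos l with rfl | hl
    · by_contra hne
      have hl' : 0 < l' := Nat.pos_of_ne_zero fun h0 => hne (by simp [h0])
      have h1 : l' / q ^ (Nat.log q l') % q = 0 := by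
        have := h (Nat.log q l'); simpa using this.symm
      have h2 : 1 ≤ l' / q ^ (Nat.log q l') :=
        Nat.one_le_div_iff (pow_pos (by omega) _) |>.mpr
          (Nat.pow_log_le_self q hl'.ne')
      have h3 : l' / q ^ (Nat.log q l') < q := by
        rw [Nat.div_lt_iff_lt_mul (pow_pos (by omega) _)]
        calc l' < q ^ (Nat.log q l' + 1) := Nat.lt_pow_succ_log_self (by omega) l'
          _ = q * q ^ (Nat.log q l') := by ring
      rw [Nat.mod_eq_of_lt h3] at h1
      omega
    · have h0 : l % q = l' % q := by simpa using h 0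
      have hdiv : l / q = l' / q := by
        refine ih (l / q) (Nat.div_lt_self hl (by omega)) (l' / q) fun i => ?_
        rw [Nat.div_div_eq_div_mul, Nat.div_div_eq_div_mul, ← pow_succ']
        exact h (i + 1)
      calc l = q * (l / q) + l % q := (Nat.div_add_mod l q).symm
        _ = q * (l' / q) + l' % q := by rw [hdiv, h0]
        _ = l' := Nat.div_add_mod l' q

lemma fenum_injective (ha : Function.Bijective a) (ha0 : a ⟨0, Fintype.card_pos⟩ = 0) :
    Function.Injective (fenum a) := by
  intro l l' h
  refine nat_eq_of_digits (Fintype.one_lt_card (α := Fq)) l l' fun i => ?_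
  have := congrArg (fun p => Polynomial.coeff p i) h
  simp only [fenum_coeff a ha0] at this
  exact congrArg Fin.val (ha.1 this)


lemma fenum_coeff_eq_zero (ha0 : a ⟨0, Fintype.card_pos⟩ = 0) {v e i : ℕ}
    (hv : v < (Fintype.card Fq) ^ e) (hi : e ≤ i) : (fenum a v).coeff i = 0 := by
  rw [fenum_coeff a ha0]
  have h1 : (1:ℕ) ≤ Fintype.card Fq := Fintype.card_pos
  have : v / (Fintype.card Fq) ^ i = 0 :=
    Nat.div_eq_of_lt (lt_of_lt_of_le hv (Nat.pow_le_pow_right h1 hi))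
  rw [← ha0]
  congr 1
  simp [this]

lemma fenum_shift (ha0 : a ⟨0, Fintype.card_pos⟩ = 0) (u v e : ℕ)
    (hv : v < (Fintype.card Fq) ^ e) :
    fenum a (u * (Fintype.card Fq) ^ e + v)
      = Polynomial.X ^ e * fenum a u + fenum a v := by
  have hq : 2 ≤ Fintype.card Fq := Fintype.one_lt_card
  ext i
  rw [Polynomial.coeff_add, fenum_coeff a ha0,
    show (Polynomial.X : Polynomial Fq) ^ e * fenum a u = fenum a u * Polynomial.X ^ e from
      mul_comm _ _, Polynomial.coeff_mul_X_pow']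
  rcases lt_or_ge i e with hie | hie
  · rw [if_neg (by omega), fenum_coeff a ha0, zero_add]
    have hw0 : 0 < (Fintype.card Fq) ^ i := pow_pos (by omega) _
    have he : (Fintype.card Fq) ^ e = (Fintype.card Fq) ^ i * (Fintype.card Fq) ^ (e - i) := by rw [← pow_add]; congr 1; omega
    have he2 : (Fintype.card Fq) ^ (e - i) = (Fintype.card Fq) ^ (e - i - 1) * Fintype.card Fq := by rw [← pow_succ]; congr 1; omega
    have hnum : u * (Fintype.card Fq) ^ e + v = v + (u * (Fintype.card Fq) ^ (e - i)) * (Fintype.card Fq) ^ i := by rw [he]; ring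
    have hdig : (u * (Fintype.card Fq) ^ e + v) / (Fintype.card Fq) ^ i % (Fintype.card Fq) = v / (Fintype.card Fq) ^ i % (Fintype.card Fq) := by
      rw [hnum, Nat.add_mul_div_right _ _ hw0,
        show u * (Fintype.card Fq) ^ (e - i) = (u * (Fintype.card Fq) ^ (e - i - 1)) * (Fintype.card Fq) from by rw [he2]; ring,
        Nat.add_mul_mod_self_right]
    congr 1
    simp [hdig]
  · rw [if_pos hie, fenum_coeff a ha0, fenum_coeff_eq_zero a ha0 hv hie, add_zero]
    have hq0e : 0 < (Fintype.card Fq) ^ e := pow_pos (by omega) _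
    have h1 : (u * (Fintype.card Fq) ^ e + v) / (Fintype.card Fq) ^ i = u / (Fintype.card Fq) ^ (i - e) := by
      rw [show (Fintype.card Fq) ^ i = (Fintype.card Fq) ^ e * (Fintype.card Fq) ^ (i - e) from by rw [← pow_add]; congr 1; omega,
        ← Nat.div_div_eq_div_mul,
        show u * (Fintype.card Fq) ^ e + v = v + u * (Fintype.card Fq) ^ e from by ring,
        Nat.add_mul_div_right _ _ hq0e, Nat.div_eq_of_lt hv, zero_add]
    congr 1
    simp [h1]

lemma fenum_surj (ha : Function.Bijective a) (ha0 : a ⟨0, Fintype.card_pos⟩ = 0)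
    (e : ℕ) (p : Polynomial Fq) (hp : ∀ i, e ≤ i → p.coeff i = 0) :
    ∃ v < (Fintype.card Fq) ^ e, fenum a v = p := by
  classical
  set φ : (Fin e → Fq) → Polynomial Fq :=
    fun c => ∑ i : Fin e, Polynomial.C (c i) * Polynomial.X ^ (i : ℕ) with hφ
  have hcoeff : ∀ (c : Fin e → Fq) (n : ℕ),
      (φ c).coeff n = if h : n < e then c ⟨n, h⟩ else 0 := by
    intro c n
    rw [hφ]
    simp only
    rw [Polynomial.finset_sum_coeff]
    simp only [Polynomial.coeff_C_mul, Polynomial.coeff_X_pow, mul_ite, mul_one, mul_zero]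
    split_ifs with h
    · rw [Finset.sum_eq_single (⟨n, h⟩ : Fin e)]
      · simp
      · intro i _ hne
        rw [if_neg]
        intro hni
        exact hne (by ext; simp [← hni])
      · intro hmem; exact absurd (Finset.mem_univ _) hmem
    · apply Finset.sum_eq_zero
      intro i _
      rw [if_neg]
      have := i.isLt
      omega
  have hφinj : Function.Injective φ := by
    intro c c' hcc
    funext i
    have := congrArg (fun p => Polynomial.coeff p (i : ℕ)) hcc
    simp only [hcoeff, i.isLt, dif_pos] at this
    simpa using this
  set Pe : Finset (Polynomial Fq) := (Finset.univ : Finset (Fin e → Fq)).image φ with hPe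
  have hPecard : Pe.card = (Fintype.card Fq) ^ e := by
    rw [hPe, Finset.card_image_of_injective _ hφinj]
    simp [Fintype.card_fun]
  have hsub : (Finset.range ((Fintype.card Fq) ^ e)).image (fenum a) ⊆ Pe := by
    intro p' hp'
    obtain ⟨l, hl, rfl⟩ := Finset.mem_image.mp hp'
    rw [Finset.mem_range] at hl
    rw [hPe, Finset.mem_image]
    refine ⟨fun i => a ⟨l / (Fintype.card Fq) ^ (i : ℕ) % Fintype.card Fq,
      Nat.mod_lt _ Fintype.card_pos⟩, Finset.mem_univ _, ?_⟩
    ext n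
    rw [hcoeff]
    split_ifs with h
    · rw [fenum_coeff a ha0]
    · exact (fenum_coeff_eq_zero a ha0 hl (by omega)).symm
  have hcard : ((Finset.range ((Fintype.card Fq) ^ e)).image (fenum a)).card
      = (Fintype.card Fq) ^ e := by
    rw [Finset.card_image_of_injective _ (fenum_injective a ha ha0), Finset.card_range]
  have heq : (Finset.range ((Fintype.card Fq) ^ e)).image (fenum a) = Pe :=
    Finset.eq_of_subset_of_card_le hsub (by rw [hPecard, hcard])
  have hpPe : p ∈ Pe := by
    rw [hPe, Finset.mem_image]
    refine ⟨fun i => p.coeff (i : ℕ), Finset.mem_univ _, ?_⟩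
    ext n
    rw [hcoeff]
    split_ifs with h
    · rfl
    · exact (hp n (by omega)).symm
  rw [← heq, Finset.mem_image] at hpPe
  obtain ⟨v, hv, hveq⟩ := hpPe
  exact ⟨v, Finset.mem_range.mp hv, hveq⟩

lemma block_count (ha : Function.Bijective a) (ha0 : a ⟨0, Fintype.card_pos⟩ = 0)
    (F : Polynomial Fq) (hF : F.Monic) (g : Polynomial Fq) :
    ((Finset.range ((Fintype.card Fq) ^ F.natDegree)).filter
      fun v => F ∣ g + fenum a v).card = 1 := by
  classical
  have hFd : F.degree = (F.natDegree : WithBot ℕ) := Polynomial.degree_eq_natDegree hF.ne_zero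
  obtain ⟨v₀, hv₀lt, hv₀⟩ := fenum_surj a ha ha0 F.natDegree ((-g) %ₘ F) (by
    intro i hi
    apply Polynomial.coeff_eq_zero_of_degree_lt
    calc ((-g) %ₘ F).degree < F.degree := Polynomial.degree_modByMonic_lt _ hF
      _ = (F.natDegree : WithBot ℕ) := hFd
      _ ≤ (i : WithBot ℕ) := by exact_mod_cast Nat.cast_le.mpr hi)
  have hdvd₀ : F ∣ g + fenum a v₀ := by
    rw [hv₀, Polynomial.modByMonic_eq_sub_mul_div _ F]
    exact ⟨-((-g) /ₘ F), by ring⟩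
  rw [Finset.card_eq_one]
  refine ⟨v₀, ?_⟩
  ext v
  simp only [Finset.mem_filter, Finset.mem_range, Finset.mem_singleton]
  constructor
  · rintro ⟨hvlt, hdvd⟩
    have hsub : F ∣ fenum a v - fenum a v₀ := by
      have := dvd_sub hdvd hdvd₀
      simpa using this
    have hdeg : (fenum a v - fenum a v₀).degree < F.degree := by
      rw [hFd]
      rw [Polynomial.degree_lt_iff_coeff_zero]
      intro n hn
      rw [Polynomial.coeff_sub, fenum_coeff_eq_zero a ha0 hvlt hn,
        fenum_coeff_eq_zero a ha0 hv₀lt hn, sub_zero]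
    have h0 : fenum a v - fenum a v₀ = 0 :=
      Polynomial.eq_zero_of_dvd_of_degree_lt hsub hdeg
    exact fenum_injective a ha ha0 (by have := sub_eq_zero.mp h0; exact this)
  · rintro rfl
    exact ⟨hv₀lt, hdvd₀⟩

lemma count_mul (ha : Function.Bijective a) (ha0 : a ⟨0, Fintype.card_pos⟩ = 0)
    (F : Polynomial Fq) (hF : F.Monic) (u : ℕ) :
    ((Finset.range (u * (Fintype.card Fq) ^ F.natDegree)).filter
      fun l => F ∣ fenum a l).card = u := by
  classical
  set Q := (Fintype.card Fq) ^ F.natDegree with hQ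
  have hQ0 : 0 < Q := pow_pos Fintype.card_pos _
  induction u with
  | zero => simp
  | succ u ih =>
    have hA : (u + 1) * Q = u * Q + Q := by ring
    have hsplit : Finset.range ((u + 1) * Q)
        = Finset.range (u * Q) ∪ Finset.Ico (u * Q) ((u + 1) * Q) := by
      rw [Finset.range_eq_Ico, Finset.range_eq_Ico]
      exact (Finset.Ico_union_Ico_eq_Ico (Nat.zero_le (u * Q)) (by nlinarith)).symm
    have hdisj : Disjoint (Finset.range (u * Q)) (Finset.Ico (u * Q) ((u + 1) * Q)) := by
      rw [Finset.range_eq_Ico]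
      exact Finset.Ico_disjoint_Ico_consecutive 0 (u * Q) ((u + 1) * Q)
    rw [hsplit, Finset.filter_union,
      Finset.card_union_of_disjoint (Finset.disjoint_filter_filter hdisj), ih]
    have himg : (Finset.Ico (u * Q) ((u + 1) * Q)).filter (fun l => F ∣ fenum a l)
        = ((Finset.range Q).filter
            fun v => F ∣ Polynomial.X ^ F.natDegree * fenum a u + fenum a v).image
          (fun v => u * Q + v) := by
      ext l
      simp only [Finset.mem_filter, Finset.mem_Ico, Finset.mem_image, Finset.mem_range]
      constructor
      · rintro ⟨⟨h1, h2⟩, h3⟩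
        refine ⟨l - u * Q, ⟨by omega, ?_⟩, by omega⟩
        rw [← fenum_shift a ha0 u (l - u * Q) F.natDegree (by omega), ← hQ,
          show u * Q + (l - u * Q) = l from by omega]
        exact h3
      · rintro ⟨v, ⟨hv, hdvd⟩, rfl⟩
        refine ⟨⟨Nat.le_add_right _ _, by omega⟩, ?_⟩
        rw [hQ, fenum_shift a ha0 u v F.natDegree hv]
        exact hdvd
    rw [himg, Finset.card_image_of_injective _ (add_right_injective (u * Q)),
      block_count a ha ha0 F hF]

lemma count_bounds (ha : Function.Bijective a) (ha0 : a ⟨0, Fintype.card_pos⟩ = 0)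
    (F : Polynomial Fq) (hF : F.Monic) (n : ℕ) :
    n / ((Fintype.card Fq) ^ F.natDegree)
      ≤ ((Finset.range n).filter fun l => F ∣ fenum a l).card ∧
    ((Finset.range n).filter fun l => F ∣ fenum a l).card
      ≤ n / ((Fintype.card Fq) ^ F.natDegree) + 1 := by
  classical
  set Q := (Fintype.card Fq) ^ F.natDegree with hQ
  have hQ0 : 0 < Q := pow_pos Fintype.card_pos _
  have hmono : ∀ {n₁ n₂ : ℕ}, n₁ ≤ n₂ →
      ((Finset.range n₁).filter fun l => F ∣ fenum a l).card
        ≤ ((Finset.range n₂).filter fun l => F ∣ fenum a l).card :=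
    fun h => Finset.card_le_card (Finset.filter_subset_filter _ (Finset.range_subset_range.mpr h))
  have h1 : n / Q * Q ≤ n := Nat.div_mul_le_self n Q
  have h2 : n < (n / Q + 1) * Q := by
    have := Nat.div_add_mod n Q
    have := Nat.mod_lt n hQ0
    nlinarith
  constructor
  · calc n / Q = ((Finset.range (n / Q * Q)).filter fun l => F ∣ fenum a l).card :=
        (count_mul a ha ha0 F hF _).symm
      _ ≤ _ := hmono h1
  · calc ((Finset.range n).filter fun l => F ∣ fenum a l).card
        ≤ ((Finset.range ((n / Q + 1) * Q)).filter fun l => F ∣ fenum a l).card :=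
          hmono h2.le
      _ = n / Q + 1 := count_mul a ha ha0 F hF _

lemma cnt_tendsto (ha : Function.Bijective a) (ha0 : a ⟨0, Fintype.card_pos⟩ = 0)
    (F : Polynomial Fq) (hF : F.Monic) :
    Filter.Tendsto (fun N : ℕ =>
        (((Finset.range (N + 1)).filter fun l => F ∣ fenum a l).card : ℝ) / (N + 1))
      Filter.atTop (nhds (1 / (Fintype.card Fq : ℝ) ^ F.natDegree)) := by
  classical
  set Q := (Fintype.card Fq) ^ F.natDegree with hQ
  have hQ0 : 0 < Q := pow_pos Fintype.card_pos _
  have hQR : (0:ℝ) < (Q:ℝ) := by exact_mod_cast hQ0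
  have hQcast : ((Fintype.card Fq : ℝ)) ^ F.natDegree = (Q : ℝ) := by
    rw [hQ]; push_cast; ring
  rw [hQcast]
  have hlb : ∀ N : ℕ, 1 / (Q:ℝ) - 1 / ((N:ℝ) + 1) ≤
      (((Finset.range (N + 1)).filter fun l => F ∣ fenum a l).card : ℝ) / ((N:ℝ) + 1) := by
    intro N
    have hN : (0:ℝ) < (N:ℝ) + 1 := by positivity
    have hb := (count_bounds a ha ha0 F hF (N + 1)).1
    have hmodR : (Q:ℝ) * (((N + 1) / Q : ℕ) : ℝ) + (((N + 1) % Q : ℕ) : ℝ) = (N:ℝ) + 1 := by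
      exact_mod_cast Nat.div_add_mod (N + 1) Q
    have hmodltR : (((N + 1) % Q : ℕ) : ℝ) < (Q:ℝ) := by
      exact_mod_cast Nat.mod_lt (N + 1) hQ0
    have hfl : ((N:ℝ) + 1) / (Q:ℝ) - 1 ≤ (((N + 1) / Q : ℕ) : ℝ) := by
      rw [sub_le_iff_le_add, div_le_iff₀ hQR]
      nlinarith
    have hcard : (((N + 1) / Q : ℕ) : ℝ)
        ≤ (((Finset.range (N + 1)).filter fun l => F ∣ fenum a l).card : ℝ) := by
      exact_mod_cast hb
    have h2 : 1 / (Q:ℝ) - 1 / ((N:ℝ) + 1) = (((N:ℝ) + 1) / (Q:ℝ) - 1) / ((N:ℝ) + 1) := by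
      field_simp
    rw [h2]
    exact (div_le_div_iff_of_pos_right hN).mpr (le_trans hfl hcard)
  have hub : ∀ N : ℕ,
      (((Finset.range (N + 1)).filter fun l => F ∣ fenum a l).card : ℝ) / ((N:ℝ) + 1)
        ≤ 1 / (Q:ℝ) + 1 / ((N:ℝ) + 1) := by
    intro N
    have hN : (0:ℝ) < (N:ℝ) + 1 := by positivity
    have hb := (count_bounds a ha ha0 F hF (N + 1)).2
    have hcast : (((N + 1) / Q : ℕ) : ℝ) ≤ ((N:ℝ) + 1) / (Q:ℝ) := by
      have := Nat.cast_div_le (m := N + 1) (n := Q) (α := ℝ)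
      push_cast at this ⊢
      exact this
    have hcard : (((Finset.range (N + 1)).filter fun l => F ∣ fenum a l).card : ℝ)
        ≤ (((N + 1) / Q : ℕ) : ℝ) + 1 := by
      exact_mod_cast hb
    have h2 : 1 / (Q:ℝ) + 1 / ((N:ℝ) + 1) = (((N:ℝ) + 1) / (Q:ℝ) + 1) / ((N:ℝ) + 1) := by
      field_simp
    rw [h2]
    exact (div_le_div_iff_of_pos_right hN).mpr (by linarith)
  have h0 : Filter.Tendsto (fun n : ℕ => 1 / ((n:ℝ) + 1)) Filter.atTop (nhds 0) :=
    tendsto_one_div_add_atTop_nhds_zero_nat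
  have hl : Filter.Tendsto (fun N : ℕ => 1 / (Q:ℝ) - 1 / ((N:ℝ) + 1))
      Filter.atTop (nhds (1 / (Q:ℝ))) := by
    simpa using tendsto_const_nhds.sub h0
  have hu : Filter.Tendsto (fun N : ℕ => 1 / (Q:ℝ) + 1 / ((N:ℝ) + 1))
      Filter.atTop (nhds (1 / (Q:ℝ))) := by
    simpa using tendsto_const_nhds.add h0
  exact tendsto_of_tendsto_of_tendsto_of_le_of_le hl hu hlb hub

end aux

lemma key_ineq (m' : ℕ) (c : ℕ → ℕ) (hc0 : c 0 = 1) (hc1 : c 1 = m' + 2)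
    (t : ℝ) (ht0 : 0 ≤ t) (ht1 : t ≤ 1) :
    1 - ∑ k ∈ Finset.range (m' + 3), (c k : ℝ) * (1 - t) ^ (m' + 2 - k) * t ^ k
      ≤ ((m' + 1 : ℝ)) ^ 2 * t ^ 2 := by
  have h1t : (0:ℝ) ≤ 1 - t := by linarith
  have hbin : ∀ n : ℕ, (1:ℝ) = ∑ k ∈ Finset.range (n + 1),
      t ^ k * (1 - t) ^ (n - k) * (n.choose k : ℝ) := by
    intro n
    calc (1:ℝ) = (t + (1 - t)) ^ n := by ring_nf
      _ = _ := add_pow t (1 - t) n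
  have hsplit : ∀ f : ℕ → ℝ, ∑ k ∈ Finset.range (m' + 3), f k
      = (∑ k ∈ Finset.range (m' + 1), f (k + 2)) + f 1 + f 0 := by
    intro f
    rw [Finset.sum_range_succ' f (m' + 2)]
    rw [Finset.sum_range_succ' (fun i => f (i + 1)) (m' + 1)]
  set g : ℕ → ℝ := fun k => t ^ k * (1 - t) ^ (m' + 2 - k) * ((m' + 2).choose k : ℝ) with hg
  have hkey : 1 - (1 - t) ^ (m' + 2) - (m' + 2 : ℝ) * (1 - t) ^ (m' + 1) * t
      = ∑ j ∈ Finset.range (m' + 1), g (j + 2) := by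
    have h1 := hbin (m' + 2)
    rw [hsplit g] at h1
    have hg0 : g 0 = (1 - t) ^ (m' + 2) := by simp [hg]
    have hg1 : g 1 = (m' + 2 : ℝ) * (1 - t) ^ (m' + 1) * t := by
      simp [hg]
      ring
    rw [hg0, hg1] at h1
    linarith
  have hlow : (1 - t) ^ (m' + 2) + (m' + 2 : ℝ) * (1 - t) ^ (m' + 1) * t
      ≤ ∑ k ∈ Finset.range (m' + 3), (c k : ℝ) * (1 - t) ^ (m' + 2 - k) * t ^ k := by
    have hsub : ({0, 1} : Finset ℕ) ⊆ Finset.range (m' + 3) := by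
      intro x hx
      simp only [Finset.mem_insert, Finset.mem_singleton] at hx
      rcases hx with rfl | rfl <;> simp <;> omega
    have hmono := Finset.sum_le_sum_of_subset_of_nonneg hsub
      (fun k _ _ => by positivity :
        ∀ k ∈ Finset.range (m' + 3), k ∉ ({0,1} : Finset ℕ) →
          (0:ℝ) ≤ (c k : ℝ) * (1 - t) ^ (m' + 2 - k) * t ^ k)
    calc (1 - t) ^ (m' + 2) + (m' + 2 : ℝ) * (1 - t) ^ (m' + 1) * t
        = ∑ k ∈ ({0, 1} : Finset ℕ), (c k : ℝ) * (1 - t) ^ (m' + 2 - k) * t ^ k := by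
          rw [Finset.sum_pair (by norm_num : (0:ℕ) ≠ 1)]
          simp only [hc0, hc1]
          push_cast
          ring
      _ ≤ _ := hmono
  have hterm : ∀ j ∈ Finset.range (m' + 1),
      g (j + 2) ≤ ((m' + 2).choose 2 : ℝ) * t ^ 2 *
        (t ^ j * (1 - t) ^ (m' - j) * (m'.choose j : ℝ)) := by
    intro j hj
    rw [Finset.mem_range] at hj
    have hnat : (m' + 2).choose (j + 2) ≤ (m' + 2).choose 2 * m'.choose j := by
      have h := Nat.choose_mul (n := m' + 2) (k := j + 2) (s := 2) (show 2 ≤ j + 2 by omega)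
      simp only [Nat.add_sub_cancel] at h
      have hpos : 1 ≤ (j + 2).choose 2 := Nat.choose_pos (by omega)
      calc (m' + 2).choose (j + 2) ≤ (m' + 2).choose (j + 2) * (j + 2).choose 2 :=
            Nat.le_mul_of_pos_right _ (by omega)
        _ = (m' + 2).choose 2 * (m' + 2 - 2).choose (j + 2 - 2) := h
        _ = (m' + 2).choose 2 * m'.choose j := by norm_num
    have hsubeq : m' + 2 - (j + 2) = m' - j := by omega
    rw [hg]
    simp only [hsubeq]
    have hc : ((m' + 2).choose (j + 2) : ℝ) ≤ ((m' + 2).choose 2 : ℝ) * (m'.choose j : ℝ) := by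
      exact_mod_cast hnat
    have hpow : (0:ℝ) ≤ t ^ (j + 2) * (1 - t) ^ (m' - j) := by positivity
    calc t ^ (j + 2) * (1 - t) ^ (m' - j) * ((m' + 2).choose (j + 2) : ℝ)
        ≤ t ^ (j + 2) * (1 - t) ^ (m' - j) * (((m' + 2).choose 2 : ℝ) * (m'.choose j : ℝ)) :=
          mul_le_mul_of_nonneg_left hc hpow
      _ = ((m' + 2).choose 2 : ℝ) * t ^ 2 * (t ^ j * (1 - t) ^ (m' - j) * (m'.choose j : ℝ)) := by
          ring
  have hsum2 : ∑ j ∈ Finset.range (m' + 1), g (j + 2)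
      ≤ ((m' + 2).choose 2 : ℝ) * t ^ 2 := by
    calc ∑ j ∈ Finset.range (m' + 1), g (j + 2)
        ≤ ∑ j ∈ Finset.range (m' + 1), ((m' + 2).choose 2 : ℝ) * t ^ 2 *
            (t ^ j * (1 - t) ^ (m' - j) * (m'.choose j : ℝ)) := Finset.sum_le_sum hterm
      _ = ((m' + 2).choose 2 : ℝ) * t ^ 2 *
            ∑ j ∈ Finset.range (m' + 1), t ^ j * (1 - t) ^ (m' - j) * (m'.choose j : ℝ) := by
          rw [Finset.mul_sum]
      _ = ((m' + 2).choose 2 : ℝ) * t ^ 2 := by rw [← hbin m', mul_one]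
  have hC2 : ((m' + 2).choose 2 : ℝ) ≤ ((m' + 1 : ℝ)) ^ 2 := by
    have h2 : (m' + 2).choose 2 * 2 = (m' + 2) * (m' + 1) := by
      have := Nat.add_one_mul_choose_eq (m' + 1) 1
      simp [Nat.choose_one_right] at this
      have h3 : m' + 1 + 1 = m' + 2 := by omega
      rw [h3] at this
      omega
    have : (m' + 2).choose 2 ≤ (m' + 1) * (m' + 1) := by nlinarith
    calc ((m' + 2).choose 2 : ℝ) ≤ ((m' + 1) * (m' + 1) : ℕ) := by exact_mod_cast this
      _ = ((m' + 1 : ℝ)) ^ 2 := by push_cast; ring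
  calc 1 - ∑ k ∈ Finset.range (m' + 3), (c k : ℝ) * (1 - t) ^ (m' + 2 - k) * t ^ k
      ≤ 1 - (1 - t) ^ (m' + 2) - (m' + 2 : ℝ) * (1 - t) ^ (m' + 1) * t := by linarith
    _ = ∑ j ∈ Finset.range (m' + 1), g (j + 2) := hkey
    _ ≤ ((m' + 2).choose 2 : ℝ) * t ^ 2 := hsum2
    _ ≤ ((m' + 1 : ℝ)) ^ 2 * t ^ 2 := mul_le_mul_of_nonneg_right hC2 (by positivity)




/-- The set `K_f` of `m`-tuples failing `H`-wise relative `r`-primality at the monic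
irreducible `f` has density `1 - ∑_{k=0}^m i_k(H) (1 - 1/q^{r deg f})^{m-k} (1/q^{r deg f})^k`,
which is at most `((m-1)/q^{r deg f})^2`. -/
theorem density_K_f {Fq : Type*} [Field Fq] [Fintype Fq]
    (a : Fin (Fintype.card Fq) → Fq) (ha : Function.Bijective a)
    (ha0 : a ⟨0, Fintype.card_pos⟩ = 0)
    (r j m : ℕ) (hr : 1 ≤ r) (hj : 2 ≤ j) (hjm : j ≤ m)
    (H : Finset (Finset (Fin m))) (hH : ∀ e ∈ H, e.card = j)
    (f : Polynomial Fq) (hf : f.Monic) (hfi : Irreducible f)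
    (Kf : Set (Fin m → Polynomial Fq))
    (hKf : ∀ g, g ∈ Kf ↔ ∃ e ∈ H, ∀ i ∈ e, f ^ r ∣ g i) :
    Filter.Tendsto (fun N : ℕ =>
      (Nat.card {g : Fin m → Polynomial Fq // g ∈ Kf ∧ ∀ i, ∃ l ≤ N, g i = fenum a l} : ℝ)
        / (Nat.card {g : Fin m → Polynomial Fq // ∀ i, ∃ l ≤ N, g i = fenum a l} : ℝ))
      Filter.atTop
      (nhds (1 - ∑ k ∈ Finset.range (m + 1), (indepCount H k : ℝ) *
        (1 - 1 / (Fintype.card Fq : ℝ) ^ (r * f.natDegree)) ^ (m - k) *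
        (1 / (Fintype.card Fq : ℝ) ^ (r * f.natDegree)) ^ k)) ∧
    1 - ∑ k ∈ Finset.range (m + 1), (indepCount H k : ℝ) *
        (1 - 1 / (Fintype.card Fq : ℝ) ^ (r * f.natDegree)) ^ (m - k) *
        (1 / (Fintype.card Fq : ℝ) ^ (r * f.natDegree)) ^ k ≤
      (((m : ℝ) - 1) / (Fintype.card Fq : ℝ) ^ (r * f.natDegree)) ^ 2 := by
  classical
  obtain ⟨m', rfl⟩ : ∃ m', m = m' + 2 := ⟨m - 2, by omega⟩
  set F : Polynomial Fq := f ^ r with hFdef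
  have hF : F.Monic := hf.pow r
  have hdF : F.natDegree = r * f.natDegree := by
    rw [hFdef, Polynomial.natDegree_pow]
  -- the real parameter t
  set t : ℝ := 1 / (Fintype.card Fq : ℝ) ^ (r * f.natDegree) with htdef
  have hXge1 : (1:ℝ) ≤ (Fintype.card Fq : ℝ) ^ (r * f.natDegree) := by
    apply one_le_pow₀
    exact_mod_cast Nat.one_le_iff_ne_zero.mpr Fintype.card_ne_zero
  have ht0 : 0 ≤ t := by positivity
  have ht1 : t ≤ 1 := by
    rw [htdef]
    exact div_le_one_of_le₀ hXge1 (by positivity)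
  have hq2 : 2 ≤ Fintype.card Fq := Fintype.one_lt_card
  -- finset infrastructure
  set SF : ℕ → Finset (Polynomial Fq) := fun N => (Finset.range (N + 1)).image (fenum a)
    with hSF
  set TF : ℕ → Finset (Fin (m' + 2) → Polynomial Fq) :=
    fun N => Fintype.piFinset fun _ => SF N with hTF
  have hinj := fenum_injective a ha ha0
  have hSFcard : ∀ N, (SF N).card = N + 1 := by
    intro N
    rw [hSF]
    simp only
    rw [Finset.card_image_of_injective _ hinj, Finset.card_range]
  have hTFcard : ∀ N, (TF N).card = (N + 1) ^ (m' + 2) := by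
    intro N
    rw [hTF]
    simp only
    rw [Fintype.card_piFinset]
    simp [hSFcard N]
  have hTmem : ∀ N (g : Fin (m' + 2) → Polynomial Fq),
      g ∈ TF N ↔ ∀ i, ∃ l ≤ N, g i = fenum a l := by
    intro N g
    rw [hTF]
    simp only [Fintype.mem_piFinset, hSF, Finset.mem_image, Finset.mem_range, Nat.lt_succ_iff]
    constructor
    · intro h i; obtain ⟨l, hl, he⟩ := h i; exact ⟨l, hl, he.symm⟩
    · intro h i; obtain ⟨l, hl, he⟩ := h i; exact ⟨l, hl, he.symm⟩
  set D : (Fin (m' + 2) → Polynomial Fq) → Finset (Fin (m' + 2)) :=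
    fun g => Finset.univ.filter fun i => F ∣ g i with hD
  set I : Finset (Finset (Fin (m' + 2))) :=
    Finset.univ.filter fun s => ∀ e ∈ H, ¬ e ⊆ s with hI
  have hDmem : ∀ g i, i ∈ D g ↔ F ∣ g i := by intro g i; rw [hD]; simp
  have hKfD : ∀ g, g ∈ Kf ↔ ∃ e ∈ H, e ⊆ D g := by
    intro g
    rw [hKf g]
    constructor
    · rintro ⟨e, he, hall⟩
      exact ⟨e, he, fun i hi => (hDmem g i).mpr (hall i hi)⟩
    · rintro ⟨e, he, hsub⟩
      exact ⟨e, he, fun i hi => (hDmem g i).mp (hsub hi)⟩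
  set B : ℕ → ℕ := fun N => ((Finset.range (N + 1)).filter fun l => F ∣ fenum a l).card
    with hB
  have hBle : ∀ N, B N ≤ N + 1 := by
    intro N
    rw [hB]
    simp only
    calc ((Finset.range (N + 1)).filter fun l => F ∣ fenum a l).card
        ≤ (Finset.range (N + 1)).card := Finset.card_filter_le _ _
      _ = N + 1 := Finset.card_range _
  have hSFB : ∀ N, ((SF N).filter fun p => F ∣ p).card = B N := by
    intro N
    rw [hSF, hB]
    simp only
    rw [Finset.filter_image, Finset.card_image_of_injective _ hinj]
  have hSFB' : ∀ N, ((SF N).filter fun p => ¬ F ∣ p).card = (N + 1) - B N := by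
    intro N
    have h := Finset.card_filter_add_card_filter_not
      (s := SF N) (p := fun p => F ∣ p)
    rw [hSFB N, hSFcard N] at h
    omega
  have hfiber : ∀ N (s : Finset (Fin (m' + 2))),
      ((TF N).filter fun g => D g = s).card
        = ((N + 1) - B N) ^ ((m' + 2) - s.card) * (B N) ^ s.card := by
    intro N s
    have hset : (TF N).filter (fun g => D g = s)
        = Fintype.piFinset (fun i => if i ∈ s then (SF N).filter (fun p => F ∣ p)
            else (SF N).filter (fun p => ¬ F ∣ p)) := by
      ext g
      simp only [Finset.mem_filter, Fintype.mem_piFinset, hTF]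
      constructor
      · rintro ⟨hg, hDs⟩ i
        have hiff : F ∣ g i ↔ i ∈ s := by rw [← hDs]; exact (hDmem g i).symm
        by_cases his : i ∈ s
        · rw [if_pos his, Finset.mem_filter]; exact ⟨hg i, hiff.mpr his⟩
        · rw [if_neg his, Finset.mem_filter]; exact ⟨hg i, fun hd => his (hiff.mp hd)⟩
      · intro hg
        have hgSF : ∀ i, g i ∈ SF N := by
          intro i
          have hgi := hg i
          by_cases his : i ∈ s
          · rw [if_pos his, Finset.mem_filter] at hgi; exact hgi.1
          · rw [if_neg his, Finset.mem_filter] at hgi; exact hgi.1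
        refine ⟨hgSF, ?_⟩
        ext i
        rw [hDmem g i]
        constructor
        · intro hd
          by_contra his
          have hgi := hg i
          rw [if_neg his, Finset.mem_filter] at hgi
          exact hgi.2 hd
        · intro his
          have hgi := hg i
          rw [if_pos his, Finset.mem_filter] at hgi
          exact hgi.2
    rw [hset, Fintype.card_piFinset]
    have hcards : ∀ i : Fin (m' + 2),
        (if i ∈ s then (SF N).filter (fun p => F ∣ p)
          else (SF N).filter (fun p => ¬ F ∣ p)).card
        = if i ∈ s then B N else (N + 1) - B N := by
      intro i
      split_ifs with h
      · exact hSFB N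
      · exact hSFB' N
    rw [Finset.prod_congr rfl fun i _ => hcards i]
    rw [Finset.prod_ite (fun _ => B N) (fun _ => (N + 1) - B N),
      Finset.prod_const, Finset.prod_const]
    have hfs : Finset.univ.filter (fun i : Fin (m' + 2) => i ∈ s) = s := by
      ext i; simp
    have hfs' : (Finset.univ.filter fun i : Fin (m' + 2) => ¬ i ∈ s).card
        = (m' + 2) - s.card := by
      have h := Finset.card_filter_add_card_filter_not
        (s := (Finset.univ : Finset (Fin (m' + 2)))) (p := fun i => i ∈ s)
      rw [hfs] at h
      simp only [Finset.card_univ, Fintype.card_fin] at h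
      omega
    rw [hfs, hfs']
    ring
  have hIcard : ∀ k, indepCount H k = (I.filter fun s => s.card = k).card := by
    intro k
    rw [indepCount, Nat.card_eq_fintype_card, Fintype.card_subtype, hI,
      Finset.filter_filter]
  have hmain : ∀ N, ((TF N).filter fun g => ∀ e ∈ H, ¬ e ⊆ D g).card
      = ∑ k ∈ Finset.range (m' + 3),
          indepCount H k * (((N + 1) - B N) ^ ((m' + 2) - k) * (B N) ^ k) := by
    intro N
    have hmaps : ∀ g ∈ (TF N).filter fun g => ∀ e ∈ H, ¬ e ⊆ D g, D g ∈ I := by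
      intro g hg
      rw [hI, Finset.mem_filter]
      exact ⟨Finset.mem_univ _, (Finset.mem_filter.mp hg).2⟩
    rw [Finset.card_eq_sum_card_fiberwise hmaps]
    have hstep : ∀ s ∈ I,
        (((TF N).filter fun g => ∀ e ∈ H, ¬ e ⊆ D g).filter fun g => D g = s).card
          = ((N + 1) - B N) ^ ((m' + 2) - s.card) * (B N) ^ s.card := by
      intro s hs
      have hIs : ∀ e ∈ H, ¬ e ⊆ s := by
        rw [hI, Finset.mem_filter] at hs; exact hs.2
      have heq : ((TF N).filter fun g => ∀ e ∈ H, ¬ e ⊆ D g).filter (fun g => D g = s)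
          = (TF N).filter fun g => D g = s := by
        rw [Finset.filter_filter]
        apply Finset.filter_congr
        intro g _
        constructor
        · rintro ⟨_, h⟩; exact h
        · intro h; exact ⟨by rw [h]; exact hIs, h⟩
      rw [heq, hfiber N s]
    rw [Finset.sum_congr rfl hstep]
    have hmaps2 : ∀ s ∈ I, s.card ∈ Finset.range (m' + 3) := by
      intro s _
      rw [Finset.mem_range]
      have hle := Finset.card_le_univ s
      simp only [Finset.card_univ, Fintype.card_fin] at hle
      omega
    rw [← Finset.sum_fiberwise_of_maps_to hmaps2
      (fun s => ((N + 1) - B N) ^ ((m' + 2) - s.card) * (B N) ^ s.card)]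
    apply Finset.sum_congr rfl
    intro k _
    have hconst : ∀ s ∈ I.filter (fun s => s.card = k),
        ((N + 1) - B N) ^ ((m' + 2) - s.card) * (B N) ^ s.card
          = ((N + 1) - B N) ^ ((m' + 2) - k) * (B N) ^ k := by
      intro s hs
      have hc := (Finset.mem_filter.mp hs).2
      rw [hc]
    rw [Finset.sum_congr rfl hconst, Finset.sum_const, smul_eq_mul, hIcard k]
  have hnumcard : ∀ N, ((TF N).filter fun g => g ∈ Kf).card
      = (N + 1) ^ (m' + 2)
        - ∑ k ∈ Finset.range (m' + 3),
            indepCount H k * (((N + 1) - B N) ^ ((m' + 2) - k) * (B N) ^ k) := by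
    intro N
    have hneg : (TF N).filter (fun g => g ∈ Kf)
        = (TF N).filter fun g => ¬ ∀ e ∈ H, ¬ e ⊆ D g := by
      apply Finset.filter_congr
      intro g _
      rw [hKfD g]
      push_neg
      rfl
    rw [hneg]
    have h := Finset.card_filter_add_card_filter_not
      (s := TF N) (p := fun g => ∀ e ∈ H, ¬ e ⊆ D g)
    rw [hmain N, hTFcard N] at h
    omega
  have hsumle : ∀ N, ∑ k ∈ Finset.range (m' + 3),
      indepCount H k * (((N + 1) - B N) ^ ((m' + 2) - k) * (B N) ^ k)
        ≤ (N + 1) ^ (m' + 2) := by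
    intro N
    rw [← hmain N, ← hTFcard N]
    exact Finset.card_filter_le _ _
  -- Nat.card identifications
  have hdenN : ∀ N : ℕ,
      Nat.card {g : Fin (m' + 2) → Polynomial Fq // ∀ i, ∃ l ≤ N, g i = fenum a l}
        = (N + 1) ^ (m' + 2) := by
    intro N
    have hset : {g : Fin (m' + 2) → Polynomial Fq | ∀ i, ∃ l ≤ N, g i = fenum a l}
        = ↑(TF N) := by
      ext g
      simp only [Set.mem_setOf_eq, Finset.mem_coe]
      exact (hTmem N g).symm
    have h1 : Nat.card {g : Fin (m' + 2) → Polynomial Fq // ∀ i, ∃ l ≤ N, g i = fenum a l}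
        = Set.ncard {g : Fin (m' + 2) → Polynomial Fq | ∀ i, ∃ l ≤ N, g i = fenum a l} :=
      Nat.card_coe_set_eq _
    rw [h1, hset, Set.ncard_coe_finset, hTFcard N]
  have hnumN : ∀ N : ℕ,
      Nat.card {g : Fin (m' + 2) → Polynomial Fq //
          g ∈ Kf ∧ ∀ i, ∃ l ≤ N, g i = fenum a l}
        = (N + 1) ^ (m' + 2)
          - ∑ k ∈ Finset.range (m' + 3),
              indepCount H k * (((N + 1) - B N) ^ ((m' + 2) - k) * (B N) ^ k) := by
    intro N
    have hset : {g : Fin (m' + 2) → Polynomial Fq | g ∈ Kf ∧ ∀ i, ∃ l ≤ N, g i = fenum a l}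
        = ↑((TF N).filter fun g => g ∈ Kf) := by
      ext g
      simp only [Set.mem_setOf_eq, Finset.coe_filter, Set.mem_setOf_eq]
      rw [hTmem N g]
      tauto
    have h1 : Nat.card {g : Fin (m' + 2) → Polynomial Fq //
          g ∈ Kf ∧ ∀ i, ∃ l ≤ N, g i = fenum a l}
        = Set.ncard {g : Fin (m' + 2) → Polynomial Fq |
            g ∈ Kf ∧ ∀ i, ∃ l ≤ N, g i = fenum a l} :=
      Nat.card_coe_set_eq _
    rw [h1, hset, Set.ncard_coe_finset, hnumcard N]
  -- ratio formula
  set pp : ℕ → ℝ := fun N => (B N : ℝ) / ((N:ℝ) + 1) with hpp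
  have hratio : ∀ N : ℕ,
      (Nat.card {g : Fin (m' + 2) → Polynomial Fq //
          g ∈ Kf ∧ ∀ i, ∃ l ≤ N, g i = fenum a l} : ℝ)
        / (Nat.card {g : Fin (m' + 2) → Polynomial Fq // ∀ i, ∃ l ≤ N, g i = fenum a l} : ℝ)
      = 1 - ∑ k ∈ Finset.range (m' + 3),
          (indepCount H k : ℝ) * (1 - pp N) ^ ((m' + 2) - k) * (pp N) ^ k := by
    intro N
    have hA : (0:ℝ) < (N:ℝ) + 1 := by positivity
    rw [hnumN N, hdenN N, Nat.cast_sub (hsumle N)]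
    have hcast : ((∑ k ∈ Finset.range (m' + 3),
        indepCount H k * (((N + 1) - B N) ^ ((m' + 2) - k) * (B N) ^ k) : ℕ) : ℝ)
        = ∑ k ∈ Finset.range (m' + 3),
            (indepCount H k : ℝ) * ((((N:ℝ) + 1) - (B N : ℝ)) ^ ((m' + 2) - k)
              * ((B N : ℝ)) ^ k) := by
      rw [Nat.cast_sum]
      apply Finset.sum_congr rfl
      intro k _
      push_cast [Nat.cast_sub (hBle N)]
      ring
    rw [hcast]
    push_cast
    rw [sub_div, div_self (by positivity : ((N:ℝ) + 1) ^ (m' + 2) ≠ 0)]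
    congr 1
    rw [Finset.sum_div]
    apply Finset.sum_congr rfl
    intro k hk
    have hkle : k ≤ m' + 2 := by
      rw [Finset.mem_range] at hk; omega
    have h1 : 1 - pp N = (((N:ℝ) + 1) - (B N : ℝ)) / ((N:ℝ) + 1) := by
      rw [hpp]; field_simp
    have hAk : ((N:ℝ) + 1) ^ ((m' + 2) - k) * ((N:ℝ) + 1) ^ k = ((N:ℝ) + 1) ^ (m' + 2) := by
      rw [← pow_add]; congr 1; omega
    rw [h1, hpp]
    simp only
    rw [div_pow, div_pow, mul_assoc, div_mul_div_comm, hAk]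
    ring
  -- limit of pp
  have hpt : Filter.Tendsto pp Filter.atTop (nhds t) := by
    have h := cnt_tendsto a ha ha0 F hF
    rw [hdF] at h
    exact h
  have hTend : Filter.Tendsto (fun N : ℕ => 1 - ∑ k ∈ Finset.range (m' + 3),
      (indepCount H k : ℝ) * (1 - pp N) ^ ((m' + 2) - k) * (pp N) ^ k)
      Filter.atTop
      (nhds (1 - ∑ k ∈ Finset.range (m' + 3), (indepCount H k : ℝ)
        * (1 - t) ^ ((m' + 2) - k) * t ^ k)) := by
    apply Filter.Tendsto.const_sub
    apply tendsto_finset_sum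
    intro k _
    exact (tendsto_const_nhds.mul ((tendsto_const_nhds.sub hpt).pow _)).mul (hpt.pow _)
  -- indepCount values at 0 and 1
  have hc0 : indepCount H 0 = 1 := by
    rw [hIcard 0]
    have : I.filter (fun s => s.card = 0) = {∅} := by
      ext s
      simp only [Finset.mem_filter, Finset.mem_singleton, Finset.card_eq_zero, hI,
        Finset.mem_univ, true_and]
      constructor
      · rintro ⟨_, rfl⟩; rfl
      · rintro rfl
        refine ⟨fun e he hsub => ?_, rfl⟩
        have hcard := hH e he
        have : e = ∅ := Finset.subset_empty.mp hsub
        rw [this] at hcard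
        simp at hcard
        omega
    rw [this, Finset.card_singleton]
  have hc1 : indepCount H 1 = m' + 2 := by
    rw [hIcard 1]
    have heq : I.filter (fun s => s.card = 1)
        = Finset.univ.filter (fun s : Finset (Fin (m' + 2)) => s.card = 1) := by
      ext s
      simp only [Finset.mem_filter, hI, Finset.mem_univ, true_and]
      constructor
      · rintro ⟨_, h⟩; exact h
      · intro h
        refine ⟨fun e he hsub => ?_, h⟩
        have hcard := hH e he
        have := Finset.card_le_card hsub
        omega
    rw [heq, ← Finset.powerset_univ, ← Finset.powersetCard_eq_filter,
      Finset.card_powersetCard]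
    simp [Nat.choose_one_right]
  have hidx : m' + 2 + 1 = m' + 3 := rfl
  constructor
  · refine Filter.Tendsto.congr (fun N => (hratio N).symm) ?_
    have : (1 : ℝ) - ∑ k ∈ Finset.range (m' + 2 + 1), (indepCount H k : ℝ)
        * (1 - t) ^ ((m' + 2) - k) * t ^ k
        = 1 - ∑ k ∈ Finset.range (m' + 3), (indepCount H k : ℝ)
          * (1 - t) ^ ((m' + 2) - k) * t ^ k := by rw [hidx]
    rw [htdef] at this
    rw [this]
    rw [← htdef]
    exact hTend
  · have hkey := key_ineq m' (indepCount H) hc0 hc1 t ht0 ht1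
    have hrhs : ((m' + 1 : ℝ)) ^ 2 * t ^ 2
        = ((((m' + 2 : ℕ) : ℝ) - 1) / (Fintype.card Fq : ℝ) ^ (r * f.natDegree)) ^ 2 := by
      rw [htdef]
      push_cast
      ring
    rw [hrhs] at hkey
    rw [show m' + 2 + 1 = m' + 3 from rfl]
    rw [htdef] at hkey
    exact hkey
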